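/- Let G be the (n×n)-grid and let Q ⊆ V_1 be a pyramidal set with i_1(Q) ≥ i_2(Q). Then the set Q' obtained from Q by the left shifting is left-pyramidal and satisfies δ(Q') ≤ δ(Q). -/

import Mathlib

/-- Vertices of the (n × n)-grid, as pairs of integers in {1, ..., n}. -/
def gridSet (n : ℕ) : Finset (ℕ × ℕ) := Finset.Icc 1 n ×ˢ Finset.Icc 1 n

/-- Grid adjacency: (x,y) ~ (x',y') iff |x-x'| + |y-y'| = 1. -/
def gridAdj (p q : ℕ × ℕ) : Prop :=
  |(p.1 : ℤ) - q.1| + |(p.2 : ℤ) - q.2| = 1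

instance (p q : ℕ × ℕ) : Decidable (gridAdj p q) := by unfold gridAdj; infer_instance

/-- V₁: the grid vertices (x, y) with x + y even. -/
def V1 (n : ℕ) : Finset (ℕ × ℕ) := (gridSet n).filter (fun p => Even (p.1 + p.2))

/-- N(S): the set of grid vertices outside S that are adjacent to some vertex of S. -/
def gridNbr (n : ℕ) (S : Finset (ℕ × ℕ)) : Finset (ℕ × ℕ) :=
  (gridSet n).filter (fun q => q ∉ S ∧ ∃ p ∈ S, gridAdj p q)

/-- δ(S) = |N(S)|. -/
def deltaN (n : ℕ) (S : Finset (ℕ × ℕ)) : ℕ := (gridNbr n S).card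

/-- A set Q ⊆ V₁ is pyramidal if for every (x, y) ∈ Q with y ≥ 2:
(x-1, y-1) ∈ Q whenever x ≥ 2, and (x+1, y-1) ∈ Q whenever x ≤ n-1. -/
def Pyramidal (n : ℕ) (Q : Finset (ℕ × ℕ)) : Prop :=
  ∀ x y : ℕ, (x, y) ∈ Q → 2 ≤ y →
    (2 ≤ x → (x - 1, y - 1) ∈ Q) ∧ (x + 1 ≤ n → (x + 1, y - 1) ∈ Q)

/-- A pyramidal set Q is left-pyramidal if (x,y) ∈ Q and x ≥ 3 imply (x-2, y) ∈ Q. -/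
def LeftPyramidal (n : ℕ) (Q : Finset (ℕ × ℕ)) : Prop :=
  Pyramidal n Q ∧ ∀ x y : ℕ, (x, y) ∈ Q → 3 ≤ x → (x - 2, y) ∈ Q

/-- Xᵢ = Rᵢ ∩ V₁: the vertices of V₁ in row i (ordered by increasing x-coordinate). -/
def Xi (n i : ℕ) : Finset (ℕ × ℕ) := (V1 n).filter (fun p => p.2 = i)

/-- X̄ᵢ = Rᵢ ∩ V₂: the grid vertices (x, y) with y = i and x + y odd. -/
def Xbar (n i : ℕ) : Finset (ℕ × ℕ) := (gridSet n).filter (fun p => Odd (p.1 + p.2) ∧ p.2 = i)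

/-- i₁(Q): the largest y with (1, y) ∈ Q, or 0 if there is none. -/
def i1 (Q : Finset (ℕ × ℕ)) : ℕ := (Q.filter (fun p => p.1 = 1)).sup Prod.snd

/-- i₂(Q): the largest y with (n, y) ∈ Q, or 0 if there is none. -/
def i2 (n : ℕ) (Q : Finset (ℕ × ℕ)) : ℕ := (Q.filter (fun p => p.1 = n)).sup Prod.snd

/-- The left shifting of Q ⊆ V₁: in each row, the r = |Xᵢ ∩ Q| vertices of Xᵢ ∩ Q are
replaced by the first r vertices x₁ⁱ, ..., x_rⁱ of Xᵢ (by increasing x-coordinate).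
A vertex v of V₁ belongs to the shifted set iff its rank in its row (within V₁) is ≤ r. -/
def leftShift (n : ℕ) (Q : Finset (ℕ × ℕ)) : Finset (ℕ × ℕ) :=
  (gridSet n).filter (fun v => Even (v.1 + v.2) ∧
    ((Xi n v.2).filter (fun u => u.1 ≤ v.1)).card ≤ (Q ∩ Xi n v.2).card)

namespace LS

lemma mem_grid {n x y : ℕ} : (x, y) ∈ gridSet n ↔ 1 ≤ x ∧ x ≤ n ∧ 1 ≤ y ∧ y ≤ n := by
  simp [gridSet, Finset.mem_product, and_assoc]

lemma adj_iff (p q : ℕ × ℕ) : gridAdj p q ↔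
    (p.1 = q.1 ∧ (p.2 = q.2 + 1 ∨ q.2 = p.2 + 1)) ∨
    (p.2 = q.2 ∧ (p.1 = q.1 + 1 ∨ q.1 = p.1 + 1)) := by
  unfold gridAdj
  rcases abs_cases ((p.1 : ℤ) - q.1) with ⟨h1, _⟩ | ⟨h1, _⟩ <;>
    rcases abs_cases ((p.2 : ℤ) - q.2) with ⟨h2, _⟩ | ⟨h2, _⟩ <;>
    rw [h1, h2] <;> omega

/-- number of naturals in [1,x] congruent to b mod 2 -/
def cnt (x b : ℕ) : ℕ := ((Finset.Icc 1 x).filter (fun u => u % 2 = b)).card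

lemma cnt_eq (x b : ℕ) (hb : b ≤ 1) : cnt x b = (x + b) / 2 := by
  induction x with
  | zero => simp [cnt]; omega
  | succ m ih =>
    have h : Finset.Icc 1 (m + 1) = insert (m + 1) (Finset.Icc 1 m) := by
      ext a
      simp only [Finset.mem_Icc, Finset.mem_insert]
      omega
    unfold cnt at ih ⊢
    rw [h, Finset.filter_insert]
    by_cases hp : (m + 1) % 2 = b
    · rw [if_pos hp, Finset.card_insert_of_notMem (by simp)]
      omega
    · rw [if_neg hp]; omega

/-- card of a parity-and-cutoff filter -/
lemma card_parity_le (n b c : ℕ) (hb : b ≤ 1) :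
    ((Finset.Icc 1 n).filter (fun z => z % 2 = b ∧ z ≤ c)).card = (min c n + b) / 2 := by
  have h : (Finset.Icc 1 n).filter (fun z => z % 2 = b ∧ z ≤ c)
      = (Finset.Icc 1 (min c n)).filter (fun z => z % 2 = b) := by
    ext a
    simp only [Finset.mem_filter, Finset.mem_Icc]
    omega
  rw [h, ← cnt_eq _ _ hb]; rfl

/-- the x-coordinates of row y of Q -/
def Arow (Q : Finset (ℕ × ℕ)) (y : ℕ) : Finset ℕ := (Q.filter (fun p => p.2 = y)).image Prod.fst

lemma mem_Arow {Q : Finset (ℕ × ℕ)} {y z : ℕ} : z ∈ Arow Q y ↔ (z, y) ∈ Q := by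
  constructor
  · rintro h
    simp only [Arow, Finset.mem_image, Finset.mem_filter] at h
    obtain ⟨p, ⟨hp, hp2⟩, hp1⟩ := h
    have : p = (z, y) := by
      cases p; simp_all
    rwa [this] at hp
  · intro h
    simp only [Arow, Finset.mem_image, Finset.mem_filter]
    exact ⟨(z, y), ⟨h, rfl⟩, rfl⟩

lemma card_Arow (Q : Finset (ℕ × ℕ)) (y : ℕ) :
    (Arow Q y).card = (Q.filter (fun p => p.2 = y)).card := by
  apply Finset.card_image_of_injOn
  intro p hp q hq h
  simp only [Finset.mem_coe, Finset.mem_filter] at hp hq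
  exact Prod.ext h (hp.2.trans hq.2.symm)

end LS
namespace LS

section Main
variable {n : ℕ} {Q : Finset (ℕ × ℕ)}

/-- row count -/
def R (n : ℕ) (Q : Finset (ℕ × ℕ)) (y : ℕ) : ℕ := (Q ∩ Xi n y).card

lemma R_eq_card_Arow (hQ : Q ⊆ V1 n) (y : ℕ) : R n Q y = (Arow Q y).card := by
  rw [card_Arow]
  unfold R
  have h : Q ∩ Xi n y = Q.filter (fun p => p.2 = y) := by
    ext p
    simp only [Finset.mem_inter, Finset.mem_filter, Xi]
    constructor
    · rintro ⟨h1, _, h3⟩; exact ⟨h1, h3⟩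
    · rintro ⟨h1, h3⟩; exact ⟨h1, hQ h1, h3⟩
  rw [h]

lemma Arow_facts (hQ : Q ⊆ V1 n) {y z : ℕ} (h : z ∈ Arow Q y) :
    1 ≤ z ∧ z ≤ n ∧ 1 ≤ y ∧ y ≤ n ∧ z % 2 = y % 2 := by
  rw [mem_Arow] at h
  have h2 := hQ h
  simp only [V1, Finset.mem_filter, mem_grid] at h2
  obtain ⟨⟨a1, a2, a3, a4⟩, he⟩ := h2
  rw [Nat.even_iff] at he
  exact ⟨a1, a2, a3, a4, by omega⟩

lemma Arow_card_le (hQ : Q ⊆ V1 n) (y : ℕ) (hb : y % 2 ≤ 1) :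
    (Arow Q y).card ≤ cnt n (y % 2) := by
  apply Finset.card_le_card
  intro z hz
  obtain ⟨a1, a2, _, _, a5⟩ := Arow_facts hQ hz
  simp only [cnt, Finset.mem_filter, Finset.mem_Icc]
  exact ⟨⟨a1, a2⟩, a5⟩

lemma rank_eq {x y : ℕ} (hx1 : 1 ≤ x) (hxn : x ≤ n) (hy1 : 1 ≤ y) (hyn : y ≤ n) :
    ((Xi n y).filter (fun u => u.1 ≤ x)).card = cnt x (y % 2) := by
  have h : (Xi n y).filter (fun u => u.1 ≤ x)
      = ((Finset.Icc 1 x).filter (fun u => u % 2 = y % 2)).image (fun u => (u, y)) := by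
    ext ⟨a, b⟩
    simp only [Xi, V1, Finset.mem_filter, Finset.mem_image, mem_grid, Finset.mem_Icc,
      Nat.even_iff, Prod.mk.injEq]
    constructor
    · rintro ⟨⟨⟨h1, h2⟩, rfl⟩, h4⟩
      exact ⟨a, ⟨⟨h1.1, h4⟩, by omega⟩, rfl, rfl⟩
    · rintro ⟨u, ⟨⟨u1, u2⟩, up⟩, rfl, rfl⟩
      exact ⟨⟨⟨⟨u1, by omega, by omega, by omega⟩, by omega⟩, rfl⟩, u2⟩
  rw [h, Finset.card_image_of_injective]
  · rfl
  · intro u v huv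
    injection huv

lemma mem_leftShift {x y : ℕ} : (x, y) ∈ leftShift n Q ↔
    1 ≤ x ∧ x ≤ n ∧ 1 ≤ y ∧ y ≤ n ∧ x % 2 = y % 2 ∧ cnt x (y % 2) ≤ R n Q y := by
  constructor
  · intro h
    simp only [leftShift, Finset.mem_filter, mem_grid, Nat.even_iff] at h
    obtain ⟨⟨b1, b2, b3, b4⟩, he, hr⟩ := h
    rw [rank_eq b1 b2 b3 b4] at hr
    exact ⟨b1, b2, b3, b4, by omega, hr⟩
  · rintro ⟨b1, b2, b3, b4, hp, hr⟩
    simp only [leftShift, Finset.mem_filter, mem_grid, Nat.even_iff]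
    refine ⟨⟨b1, b2, b3, b4⟩, by omega, ?_⟩
    rw [rank_eq b1 b2 b3 b4]
    exact hr

end Main
end LS
namespace LS

section Row
variable {n b : ℕ} {A B : Finset ℕ}

/-- the set of "run bottoms" of A -/
def bots (A : Finset ℕ) : Finset ℕ := A.filter (fun a => 2 ≤ a ∧ a - 2 ∉ A)

lemma row_master (hA : ∀ a ∈ A, 1 ≤ a ∧ a ≤ n)
    (hB : ∀ z, 1 ≤ z → z ≤ n → ((z + 1) ∈ A ∨ (2 ≤ z ∧ z - 1 ∈ A)) → z ∈ B) :
    A.card + (bots A).card ≤ B.card + (if n ∈ A then 1 else 0) := by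
  classical
  set T : Finset ℕ := (A.erase n).image (fun a => a + 1) with hT
  set L : Finset ℕ := (bots A).image (fun a => a - 1) with hL
  have hTB : T ⊆ B := by
    intro z hz
    simp only [hT, Finset.mem_image, Finset.mem_erase] at hz
    obtain ⟨a, ⟨han, haA⟩, rfl⟩ := hz
    obtain ⟨h1, h2⟩ := hA a haA
    exact hB (a + 1) (by omega) (by omega) (Or.inr ⟨by omega, by simpa using haA⟩)
  have hLB : L ⊆ B := by
    intro z hz
    simp only [hL, bots, Finset.mem_image, Finset.mem_filter] at hz
    obtain ⟨a, ⟨haA, ha2, _⟩, rfl⟩ := hz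
    obtain ⟨h1, h2⟩ := hA a haA
    refine hB (a - 1) (by omega) (by omega) (Or.inl (by simpa [Nat.sub_add_cancel h1] using haA))
  have hdisj : Disjoint T L := by
    rw [Finset.disjoint_left]
    intro z hzT hzL
    simp only [hT, Finset.mem_image, Finset.mem_erase] at hzT
    simp only [hL, bots, Finset.mem_image, Finset.mem_filter] at hzL
    obtain ⟨a, ⟨_, haA⟩, ha⟩ := hzT
    obtain ⟨c, ⟨hcA, hc2, hc2n⟩, hc⟩ := hzL
    have : a = c - 2 := by omega
    exact hc2n (this ▸ haA)
  have hTcard : T.card = (A.erase n).card :=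
    Finset.card_image_of_injective _ (fun u v h => by omega)
  have hLcard : L.card = (bots A).card := by
    apply Finset.card_image_of_injOn
    intro u hu v hv h
    simp only [bots, Finset.mem_coe, Finset.mem_filter] at hu hv
    have h' : u - 1 = v - 1 := h
    omega
  have hunion : (T ∪ L).card = T.card + L.card := Finset.card_union_of_disjoint hdisj
  have hsub : T ∪ L ⊆ B := Finset.union_subset hTB hLB
  have hle : (T ∪ L).card ≤ B.card := Finset.card_le_card hsub
  by_cases hn : n ∈ A
  · rw [if_pos hn]
    have := Finset.card_erase_of_mem hn
    omega
  · rw [if_neg hn]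
    have : A.erase n = A := Finset.erase_eq_of_notMem hn
    rw [this] at hTcard
    omega

lemma min_mem_bots (hA : ∀ a ∈ A, 1 ≤ a) (hne : A.Nonempty) (h2 : 2 ≤ A.min' hne) :
    A.min' hne ∈ bots A := by
  have hm := A.min'_mem hne
  simp only [bots, Finset.mem_filter]
  refine ⟨hm, h2, fun hc => ?_⟩
  have := A.min'_le _ hc
  omega

lemma gap_bots {e d : ℕ} (hpar : ∀ a ∈ A, a % 2 = b) (heb : e % 2 = b) (heA : e ∉ A)
    (hdA : d ∈ A) (hed : e < d) : ∃ a ∈ bots A, e < a := by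
  classical
  have hne : (A.filter (fun a => e < a)).Nonempty := ⟨d, by simp [hdA, hed]⟩
  set a := (A.filter (fun a => e < a)).min' hne with ha
  have ham := (A.filter (fun a => e < a)).min'_mem hne
  simp only [Finset.mem_filter] at ham
  obtain ⟨haA, hea⟩ := ham
  have hpa := hpar a haA
  have ha2 : e + 2 ≤ a := by omega
  refine ⟨a, ?_, by omega⟩
  simp only [bots, Finset.mem_filter]
  refine ⟨haA, by omega, fun hc => ?_⟩
  have h1 : e < a - 2 := by
    rcases Nat.lt_or_ge e (a - 2) with h | h
    · exact h
    · have : a - 2 = e := by omega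
      exact absurd (this ▸ hc) heA
  have := (A.filter (fun a => e < a)).min'_le (a - 2) (by simp [hc, h1])
  omega

lemma exists_gap (hA : ∀ a ∈ A, 1 ≤ a ∧ a ≤ n ∧ a % 2 = b) (hcard : A.card < cnt n b) :
    ∃ e, 1 ≤ e ∧ e ≤ n ∧ e % 2 = b ∧ e ∉ A := by
  by_contra hc
  push_neg at hc
  have hsub : (Finset.Icc 1 n).filter (fun u => u % 2 = b) ⊆ A := by
    intro z hz
    simp only [Finset.mem_filter, Finset.mem_Icc] at hz
    exact hc z hz.1.1 hz.1.2 hz.2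
  have := Finset.card_le_card hsub
  unfold cnt at hcard
  omega

end Row
end LS
namespace LS
section Main2
variable {n : ℕ} {Q : Finset (ℕ × ℕ)}

lemma desc (hpyr : Pyramidal n Q) (hn : 2 ≤ n) :
    ∀ k m : ℕ, (1, m) ∈ Q → k < m →
      (k % 2 = 0 → (1, m - k) ∈ Q) ∧ (k % 2 = 1 → (2, m - k) ∈ Q) := by
  intro k
  induction k with
  | zero =>
    intro m hm _
    exact ⟨fun _ => by simpa using hm, fun h => by simp at h⟩
  | succ j ih =>
    intro m hm hj
    obtain ⟨ih1, ih2⟩ := ih m hm (by omega)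
    constructor
    · intro h
      have hp := ih2 (by omega)
      have := (hpyr 2 (m - j) hp (by omega)).1 (by omega)
      have e : ((2 : ℕ) - 1, m - j - 1) = ((1 : ℕ), m - (j + 1)) := by
        rw [Prod.mk.injEq]; omega
      rwa [e] at this
    · intro h
      have hp := ih1 (by omega)
      have := (hpyr 1 (m - j) hp (by omega)).2 hn
      have e : ((1 : ℕ) + 1, m - j - 1) = ((2 : ℕ), m - (j + 1)) := by
        rw [Prod.mk.injEq]; omega
      rwa [e] at this

lemma h12fact (hQ : Q ⊆ V1 n) (hpyr : Pyramidal n Q) (h12 : i2 n Q ≤ i1 Q)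
    {y : ℕ} (hny : (n, y) ∈ Q) (hy : 1 ≤ y) : (2 - y % 2, y) ∈ Q := by
  have hgrid := hQ hny
  simp only [V1, Finset.mem_filter, mem_grid, Nat.even_iff] at hgrid
  obtain ⟨⟨g1, g2, g3, g4⟩, gpar⟩ := hgrid
  rcases Nat.lt_or_ge n 2 with hn | hn
  · have hn1 : n = 1 := by omega
    subst hn1
    have : 2 - y % 2 = 1 := by omega
    rw [this]; exact hny
  · have hi2 : y ≤ i2 n Q := by
      unfold i2
      exact Finset.le_sup (f := Prod.snd) (s := Q.filter (fun p => p.1 = n)) (b := (n, y)) (Finset.mem_filter.mpr ⟨hny, rfl⟩)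
    have hi1 : 1 ≤ i1 Q := by omega
    have hne : (Q.filter (fun p => p.1 = 1)).Nonempty := by
      by_contra hc
      rw [Finset.not_nonempty_iff_eq_empty] at hc
      have : i1 Q = 0 := by unfold i1; rw [hc]; rfl
      omega
    obtain ⟨p, hp, hsup⟩ := Finset.exists_mem_eq_sup _ hne Prod.snd
    simp only [Finset.mem_filter] at hp
    obtain ⟨hpQ, hp1⟩ := hp
    have hpm : (1, p.2) ∈ Q := by
      have : p = (1, p.2) := by rw [← hp1]
      rwa [this] at hpQ
    set m := p.2 with hmdef
    have hym : y ≤ m := by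
      have : i1 Q = m := by unfold i1; exact hsup
      omega
    have hmpar : m % 2 = 1 := by
      have := hQ hpm
      simp only [V1, Finset.mem_filter, Nat.even_iff] at this
      omega
    rcases Nat.eq_or_lt_of_le hym with heq | hlt
    · have : 2 - y % 2 = 1 := by omega
      rw [this, heq]; exact hpm
    · obtain ⟨d1, d2⟩ := desc hpyr hn (m - y) m hpm (by omega)
      have hmy : m - (m - y) = y := by omega
      by_cases hk : (m - y) % 2 = 0
      · have h1 := d1 hk
        rw [hmy] at h1
        have : 2 - y % 2 = 1 := by omega
        rw [this]; exact h1
      · have h1 := d2 (by omega)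
        rw [hmy] at h1
        have : 2 - y % 2 = 2 := by omega
        rw [this]; exact h1

lemma step (hQ : Q ⊆ V1 n) (hpyr : Pyramidal n Q) (h12 : i2 n Q ≤ i1 Q)
    {y : ℕ} (hy2 : 2 ≤ y) (hyn : y ≤ n) :
    R n Q y ≤ R n Q (y - 1) + 1
    ∧ (y % 2 = 0 → R n Q y ≤ R n Q (y - 1))
    ∧ (y % 2 = 0 → 1 ≤ R n Q y → 2 * R n Q y < n → R n Q y + 1 ≤ R n Q (y - 1))
    ∧ (y % 2 = 1 → 2 * R n Q y ≤ n → R n Q y ≤ R n Q (y - 1)) := by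
  classical
  rw [R_eq_card_Arow hQ y, R_eq_card_Arow hQ (y - 1)]
  set A := Arow Q y with hAdef
  set B := Arow Q (y - 1) with hBdef
  have hA : ∀ a ∈ A, 1 ≤ a ∧ a ≤ n := fun a ha =>
    ⟨(Arow_facts hQ ha).1, (Arow_facts hQ ha).2.1⟩
  have hApar : ∀ a ∈ A, a % 2 = y % 2 := fun a ha => (Arow_facts hQ ha).2.2.2.2
  have hB : ∀ z, 1 ≤ z → z ≤ n → ((z + 1) ∈ A ∨ (2 ≤ z ∧ z - 1 ∈ A)) → z ∈ B := by
    intro z hz1 hzn hor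
    rw [hBdef, mem_Arow]
    rcases hor with h | ⟨h2, h⟩
    · rw [hAdef, mem_Arow] at h
      have := (hpyr (z + 1) y h hy2).1 (by omega)
      have e : (z + 1 - 1, y - 1) = (z, y - 1) := by rw [Prod.mk.injEq]; omega
      rwa [e] at this
    · rw [hAdef, mem_Arow] at h
      have := (hpyr (z - 1) y h hy2).2 (by omega)
      have e : (z - 1 + 1, y - 1) = (z, y - 1) := by rw [Prod.mk.injEq]; omega
      rwa [e] at this
  have hmaster := row_master hA hB
  have hsplit : (if n ∈ A then 1 else 0) ≤ 1 := by split <;> omega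
  refine ⟨by omega, ?_, ?_, ?_⟩
  · -- y even
    intro hyev
    rcases Finset.eq_empty_or_nonempty A with he | hne
    · simp [he]
    · have hmin2 : 2 ≤ A.min' hne := by
        have hm := A.min'_mem hne
        have := hA _ hm
        have := hApar _ hm
        omega
      have hb1 : 1 ≤ (bots A).card :=
        Finset.card_pos.mpr ⟨_, min_mem_bots (fun a ha => (hA a ha).1) hne hmin2⟩
      omega
  · -- y even, strengthened
    intro hyev hr1 hrn
    by_cases hnA : n ∈ A
    · have h2A : (2 : ℕ) ∈ A := by
        rw [hAdef, mem_Arow] at hnA ⊢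
        have := h12fact hQ hpyr h12 hnA (by omega)
        rwa [show 2 - y % 2 = 2 by omega] at this
      have hnpar : n % 2 = 0 := by
        have := hApar _ hnA
        omega
      obtain ⟨e, he1, hen, hepar, heA⟩ := exists_gap
        (fun a ha => ⟨(hA a ha).1, (hA a ha).2, by rw [hApar a ha, hyev]⟩)
        (by rw [cnt_eq n 0 (by omega)]; omega)
      have hne2 : e ≠ 2 := fun h => heA (h ▸ h2A)
      have he4 : 4 ≤ e := by omega
      have hen' : e < n := by
        have : e ≠ n := fun h => heA (h ▸ hnA)
        omega
      obtain ⟨a, haB, hea⟩ := gap_bots (b := 0)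
        (fun a ha => by rw [hApar a ha, hyev]) hepar heA hnA hen'
      have hne : A.Nonempty := Finset.card_pos.mp (by omega)
      have hmin2 : 2 ≤ A.min' hne := by
        have hm := A.min'_mem hne
        have := hA _ hm
        have := hApar _ hm
        omega
      have hminB := min_mem_bots (fun a ha => (hA a ha).1) hne hmin2
      have hminle : A.min' hne ≤ 2 := A.min'_le 2 h2A
      have hb2 : 2 ≤ (bots A).card :=
        Finset.one_lt_card.mpr ⟨_, hminB, a, haB, by omega⟩
      rw [if_pos hnA] at hmaster
      omega
    · have hne : A.Nonempty := Finset.card_pos.mp (by omega)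
      have hmin2 : 2 ≤ A.min' hne := by
        have hm := A.min'_mem hne
        have := hA _ hm
        have := hApar _ hm
        omega
      have hb1 : 1 ≤ (bots A).card :=
        Finset.card_pos.mpr ⟨_, min_mem_bots (fun a ha => (hA a ha).1) hne hmin2⟩
      rw [if_neg hnA] at hmaster
      omega
  · -- y odd
    intro hyodd h2r
    rcases Finset.eq_empty_or_nonempty A with he | hne
    · simp [he]
    by_cases hnA : n ∈ A
    · have h1A : (1 : ℕ) ∈ A := by
        rw [hAdef, mem_Arow] at hnA ⊢
        have := h12fact hQ hpyr h12 hnA (by omega)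
        rwa [show 2 - y % 2 = 1 by omega] at this
      have hnpar : n % 2 = 1 := by
        have := hApar _ hnA
        omega
      obtain ⟨e, he1, hen, hepar, heA⟩ := exists_gap
        (fun a ha => ⟨(hA a ha).1, (hA a ha).2, by rw [hApar a ha, hyodd]⟩)
        (by rw [cnt_eq n 1 (by omega)]; omega)
      have hne1 : e ≠ 1 := fun h => heA (h ▸ h1A)
      have hen' : e < n := by
        have : e ≠ n := fun h => heA (h ▸ hnA)
        omega
      obtain ⟨a, haB, hea⟩ := gap_bots (b := 1)
        (fun a ha => by rw [hApar a ha, hyodd]) hepar heA hnA hen'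
      have hb1 : 1 ≤ (bots A).card := Finset.card_pos.mpr ⟨a, haB⟩
      rw [if_pos hnA] at hmaster
      omega
    · rw [if_neg hnA] at hmaster
      omega

end Main2
end LS
namespace LS
section Main3
variable {n : ℕ} {Q : Finset (ℕ × ℕ)}

lemma pyr_leftShift (hQ : Q ⊆ V1 n) (hpyr : Pyramidal n Q) (h12 : i2 n Q ≤ i1 Q) :
    Pyramidal n (leftShift n Q) := by
  intro x y hmem hy2
  rw [mem_leftShift] at hmem
  obtain ⟨b1, b2, b3, b4, hp, hr⟩ := hmem
  rw [cnt_eq _ _ (by omega)] at hr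
  have hRle : R n Q y ≤ (n + y % 2) / 2 := by
    have h := Arow_card_le hQ y (by omega)
    rw [cnt_eq _ _ (by omega)] at h
    rw [R_eq_card_Arow hQ y]
    exact h
  obtain ⟨s1, s2, s3, s4⟩ := step hQ hpyr h12 hy2 b4
  have hr1 : 1 ≤ R n Q y := le_trans (by omega) hr
  constructor
  · intro hx2
    rw [mem_leftShift, cnt_eq _ _ (by omega)]
    refine ⟨by omega, by omega, by omega, by omega, by omega, ?_⟩
    by_cases hpar : y % 2 = 0
    · have := s2 hpar; omega
    · omega
  · intro hxn
    rw [mem_leftShift, cnt_eq _ _ (by omega)]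
    refine ⟨by omega, by omega, by omega, by omega, by omega, ?_⟩
    by_cases hpar : y % 2 = 0
    · have e2 := s2 hpar
      by_cases h2r : 2 * R n Q y < n
      · have := s3 hpar hr1 h2r; omega
      · omega
    · by_cases h2r : 2 * R n Q y ≤ n
      · have := s4 (by omega) h2r; omega
      · omega

lemma leftPyr_leftShift (hQ : Q ⊆ V1 n) (hpyr : Pyramidal n Q) (h12 : i2 n Q ≤ i1 Q) :
    LeftPyramidal n (leftShift n Q) := by
  refine ⟨pyr_leftShift hQ hpyr h12, ?_⟩
  intro x y hmem hx3
  rw [mem_leftShift] at hmem ⊢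
  obtain ⟨b1, b2, b3, b4, hp, hr⟩ := hmem
  rw [cnt_eq _ _ (by omega)] at hr
  rw [cnt_eq _ _ (by omega)]
  exact ⟨by omega, by omega, by omega, by omega, by omega, by omega⟩

end Main3
end LS
namespace LS
section Main4
variable {n : ℕ} {Q S : Finset (ℕ × ℕ)}

lemma cardA' (hQ : Q ⊆ V1 n) {t : ℕ} (ht1 : 1 ≤ t) (htn : t ≤ n) :
    (Arow (leftShift n Q) t).card = R n Q t := by
  have hRle : R n Q t ≤ (n + t % 2) / 2 := by
    have h := Arow_card_le hQ t (by omega)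
    rw [cnt_eq _ _ (by omega)] at h
    rw [R_eq_card_Arow hQ t]
    exact h
  have hset : Arow (leftShift n Q) t
      = (Finset.Icc 1 n).filter (fun z => z % 2 = t % 2 ∧ z ≤ 2 * R n Q t) := by
    ext z
    rw [mem_Arow, mem_leftShift, cnt_eq _ _ (by omega)]
    simp only [Finset.mem_filter, Finset.mem_Icc]
    omega
  rw [hset, card_parity_le _ _ _ (by omega)]
  omega

lemma mem_gridNbr_iff {q : ℕ × ℕ} :
    q ∈ gridNbr n S ↔ q ∈ gridSet n ∧ q ∉ S ∧ ∃ p ∈ S, gridAdj p q := by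
  simp [gridNbr, Finset.mem_filter]

lemma deltaN_eq_sum (S : Finset (ℕ × ℕ)) :
    deltaN n S = ∑ y ∈ Finset.Icc 1 n, ((gridNbr n S).filter (fun p => p.2 = y)).card := by
  unfold deltaN
  apply Finset.card_eq_sum_card_fiberwise
  intro q hq
  rw [Finset.mem_coe, mem_gridNbr_iff] at hq
  have := hq.1
  rw [show q = (q.1, q.2) from rfl, mem_grid] at this
  simp only [Finset.mem_coe, Finset.mem_Icc]
  omega

lemma fiber_lower (hS : S ⊆ V1 n) {y : ℕ} (hy2 : 2 ≤ y) (hyn : y ≤ n) :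
    (Arow S (y - 1)).card ≤ ((gridNbr n S).filter (fun p => p.2 = y)).card := by
  apply Finset.card_le_card_of_injOn (fun z => (z, y))
  · intro z hz
    obtain ⟨a1, a2, _, _, a5⟩ := Arow_facts hS hz
    rw [Finset.mem_coe, mem_Arow] at hz
    refine Finset.mem_filter.mpr ⟨mem_gridNbr_iff.mpr ⟨mem_grid.mpr ⟨a1, a2, by omega, hyn⟩, ?_, ⟨(z, y - 1), hz, ?_⟩⟩, rfl⟩
    · intro hc
      have h1 := hS hc
      simp only [V1, Finset.mem_filter, Nat.even_iff] at h1
      omega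
    · rw [adj_iff]
      exact Or.inl ⟨rfl, Or.inr (by dsimp only; omega)⟩
  · intro u _ v _ h
    injection h

lemma fiber_upper (hS : S ⊆ V1 n) (hpyrS : Pyramidal n S) {y : ℕ} (hy2 : 2 ≤ y) :
    ((gridNbr n S).filter (fun p => p.2 = y)).card ≤ (Arow S (y - 1)).card := by
  apply Finset.card_le_card_of_injOn (fun p => p.1)
  · intro q hq
    simp only [Finset.mem_coe, Finset.mem_filter] at hq
    obtain ⟨hqN, hqy⟩ := hq
    rw [mem_gridNbr_iff] at hqN
    obtain ⟨hqg, hqS, p, hpS, hadj⟩ := hqN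
    rw [show q = (q.1, q.2) from rfl, mem_grid] at hqg
    have hpg : 1 ≤ p.1 ∧ p.1 ≤ n ∧ 1 ≤ p.2 ∧ p.2 ≤ n := by
      have := hS hpS
      simp only [V1, Finset.mem_filter] at this
      rw [show p = (p.1, p.2) from rfl, mem_grid] at this
      exact this.1
    rw [Finset.mem_coe, mem_Arow]
    rw [adj_iff] at hadj
    have hp : p = (p.1, p.2) := rfl
    rcases hadj with ⟨h1, h2 | h2⟩ | ⟨h1, h2 | h2⟩
    · -- p.2 = q.2 + 1 : p is above q
      have hpm : (q.1, y + 1) ∈ S := by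
        have e : p = (q.1, y + 1) := Prod.ext h1 (by omega)
        rwa [e] at hpS
      rcases Nat.lt_or_ge q.1 2 with hx | hx
      · have h2n : 2 ≤ n := by omega
        have hq1 : q.1 = 1 := by omega
        have hstep1 := (hpyrS q.1 (y + 1) hpm (by omega)).2 (by omega)
        have hstep2 := (hpyrS (q.1 + 1) (y + 1 - 1) (by simpa using hstep1) (by omega)).1 (by omega)
        simpa using hstep2
      · have hstep1 := (hpyrS q.1 (y + 1) hpm (by omega)).1 hx
        have hstep2 := (hpyrS (q.1 - 1) (y + 1 - 1) (by simpa using hstep1) (by omega)).2 (by omega)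
        have e : (q.1 - 1 + 1, y + 1 - 1 - 1) = (q.1, y - 1) := by rw [Prod.mk.injEq]; omega
        rwa [e] at hstep2
    · -- q.2 = p.2 + 1 : p is below q
      have : p = (q.1, y - 1) := by rw [hp, ← h1]; rw [Prod.mk.injEq]; omega
      rwa [← this]
    · -- p.1 = q.1 + 1
      have hpm : (q.1 + 1, y) ∈ S := by
        have e : p = (q.1 + 1, y) := Prod.ext h2 (by omega)
        rwa [e] at hpS
      have hstep := (hpyrS (q.1 + 1) y hpm hy2).1 (by omega)
      simpa using hstep
    · -- q.1 = p.1 + 1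
      have hpm : (p.1, y) ∈ S := by
        have e : p = (p.1, y) := Prod.ext rfl (by omega)
        rwa [e] at hpS
      have hstep := (hpyrS p.1 y hpm hy2).2 (by omega)
      have e : (p.1 + 1, y - 1) = (q.1, y - 1) := by rw [Prod.mk.injEq]; omega
      rwa [e] at hstep
  · intro u hu v hv h
    simp only [Finset.mem_coe, Finset.mem_filter] at hu hv
    exact Prod.ext h (hu.2.trans hv.2.symm)

end Main4
end LS
namespace LS
section Main5
variable {n : ℕ} {Q S : Finset (ℕ × ℕ)}

/-- horizontal neighbourhood of row 1 -/
def B1 (n : ℕ) (S : Finset (ℕ × ℕ)) : Finset ℕ :=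
  (Finset.Icc 1 n).filter (fun z => (z + 1) ∈ Arow S 1 ∨ (2 ≤ z ∧ z - 1 ∈ Arow S 1))

lemma fiber1_lower (hS : S ⊆ V1 n) :
    (B1 n S).card ≤ ((gridNbr n S).filter (fun p => p.2 = 1)).card := by
  apply Finset.card_le_card_of_injOn (fun z => (z, 1))
  · intro z hz
    simp only [B1, Finset.mem_coe, Finset.mem_filter, Finset.mem_Icc] at hz
    obtain ⟨⟨hz1, hzn⟩, hor⟩ := hz
    have hn1 : 1 ≤ n := by omega
    have hnotin : (z, 1) ∉ S := by
      intro hc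
      have h1 := hS hc
      simp only [V1, Finset.mem_filter, Nat.even_iff] at h1
      rcases hor with h | ⟨h2, h⟩ <;>
      · have := Arow_facts hS h
        omega
    rcases hor with h | ⟨h2, h⟩
    · rw [mem_Arow] at h
      refine Finset.mem_filter.mpr ⟨mem_gridNbr_iff.mpr
        ⟨mem_grid.mpr ⟨hz1, hzn, le_refl 1, hn1⟩, hnotin, ⟨(z + 1, 1), h, ?_⟩⟩, rfl⟩
      rw [adj_iff]
      exact Or.inr ⟨rfl, Or.inl rfl⟩
    · rw [mem_Arow] at h
      refine Finset.mem_filter.mpr ⟨mem_gridNbr_iff.mpr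
        ⟨mem_grid.mpr ⟨hz1, hzn, le_refl 1, hn1⟩, hnotin, ⟨(z - 1, 1), h, ?_⟩⟩, rfl⟩
      rw [adj_iff]
      exact Or.inr ⟨rfl, Or.inr (by dsimp only; omega)⟩
  · intro u _ v _ h
    injection h

lemma fiber1_upper (hS : S ⊆ V1 n) (hpyrS : Pyramidal n S) :
    ((gridNbr n S).filter (fun p => p.2 = 1)).card ≤ (B1 n S).card := by
  apply Finset.card_le_card_of_injOn (fun p => p.1)
  · intro q hq
    simp only [Finset.mem_coe, Finset.mem_filter] at hq
    obtain ⟨hqN, hqy⟩ := hq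
    rw [mem_gridNbr_iff] at hqN
    obtain ⟨hqg, hqS, p, hpS, hadj⟩ := hqN
    rw [show q = (q.1, q.2) from rfl, mem_grid] at hqg
    have hpg : 1 ≤ p.1 ∧ p.1 ≤ n ∧ 1 ≤ p.2 ∧ p.2 ≤ n := by
      have := hS hpS
      simp only [V1, Finset.mem_filter] at this
      rw [show p = (p.1, p.2) from rfl, mem_grid] at this
      exact this.1
    simp only [B1, Finset.mem_coe, Finset.mem_filter, Finset.mem_Icc, mem_Arow]
    refine ⟨⟨by omega, by omega⟩, ?_⟩
    rw [adj_iff] at hadj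
    rcases hadj with ⟨h1, h2 | h2⟩ | ⟨h1, h2 | h2⟩
    · -- p.2 = q.2 + 1 = 2
      have hpm : (q.1, 2) ∈ S := by
        have e : p = (q.1, 2) := Prod.ext h1 (by omega)
        rwa [e] at hpS
      rcases Nat.lt_or_ge q.1 2 with hx | hx
      · have hq1 : q.1 = 1 := by omega
        have hstep := (hpyrS q.1 2 hpm (by omega)).2 (by omega)
        exact Or.inl (by simpa using hstep)
      · have hstep := (hpyrS q.1 2 hpm (by omega)).1 hx
        exact Or.inr ⟨hx, by simpa using hstep⟩
    · -- q.2 = p.2 + 1 : impossible, p.2 = 0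
      omega
    · -- p.1 = q.1 + 1
      have hpm : (q.1 + 1, 1) ∈ S := by
        have e : p = (q.1 + 1, 1) := Prod.ext h2 (by omega)
        rwa [e] at hpS
      exact Or.inl hpm
    · -- q.1 = p.1 + 1
      have hpm : (p.1, 1) ∈ S := by
        have e : p = (p.1, 1) := Prod.ext rfl (by omega)
        rwa [e] at hpS
      exact Or.inr ⟨by omega, by rwa [show q.1 - 1 = p.1 from by omega]⟩
  · intro u hu v hv h
    simp only [Finset.mem_coe, Finset.mem_filter] at hu hv
    exact Prod.ext h (hu.2.trans hv.2.symm)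

lemma B1_leftShift_card (hQ : Q ⊆ V1 n) :
    (B1 n (leftShift n Q)).card = (min (2 * R n Q 1) n) / 2 := by
  have hset : B1 n (leftShift n Q)
      = (Finset.Icc 1 n).filter (fun z => z % 2 = 0 ∧ z ≤ 2 * R n Q 1) := by
    ext z
    simp only [B1, Finset.mem_filter, Finset.mem_Icc, mem_Arow, mem_leftShift,
      cnt_eq _ _ (by omega : 1 % 2 ≤ 1)]
    omega
  rw [hset]
  have := card_parity_le n 0 (2 * R n Q 1) (by omega)
  omega

lemma B1_lower (hQ : Q ⊆ V1 n) (hpyr : Pyramidal n Q) (h12 : i2 n Q ≤ i1 Q) :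
    (min (2 * R n Q 1) n) / 2 ≤ (B1 n Q).card := by
  classical
  rw [R_eq_card_Arow hQ 1]
  set A := Arow Q 1 with hAdef
  have hA : ∀ a ∈ A, 1 ≤ a ∧ a ≤ n := fun a ha =>
    ⟨(Arow_facts hQ ha).1, (Arow_facts hQ ha).2.1⟩
  have hApar : ∀ a ∈ A, a % 2 = 1 := fun a ha => (Arow_facts hQ ha).2.2.2.2
  have hB : ∀ z, 1 ≤ z → z ≤ n → ((z + 1) ∈ A ∨ (2 ≤ z ∧ z - 1 ∈ A)) → z ∈ B1 n Q := by
    intro z h1 h2 h3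
    simp only [B1, Finset.mem_filter, Finset.mem_Icc]
    exact ⟨⟨h1, h2⟩, h3⟩
  have hmaster := row_master hA hB
  by_cases hnA : n ∈ A
  · have h1A : (1 : ℕ) ∈ A := by
      rw [hAdef, mem_Arow] at hnA ⊢
      have := h12fact hQ hpyr h12 hnA (by omega)
      rwa [show 2 - 1 % 2 = 1 by omega] at this
    have hnpar : n % 2 = 1 := hApar _ hnA
    have hcard_le : A.card ≤ cnt n 1 := by
      rw [hAdef]
      exact Arow_card_le hQ 1 (by omega)
    rw [cnt_eq n 1 (by omega)] at hcard_le
    rcases Nat.lt_or_ge A.card ((n + 1) / 2) with hlt | hge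
    · obtain ⟨e, he1, hen, hepar, heA⟩ := exists_gap (b := 1)
        (fun a ha => ⟨(hA a ha).1, (hA a ha).2, hApar a ha⟩)
        (by rw [cnt_eq n 1 (by omega)]; omega)
      have hne1 : e ≠ 1 := fun h => heA (h ▸ h1A)
      have hen' : e < n := by
        have : e ≠ n := fun h => heA (h ▸ hnA)
        omega
      obtain ⟨a, haB, hea⟩ := gap_bots (b := 1) hApar hepar heA hnA hen'
      have hb1 : 1 ≤ (bots A).card := Finset.card_pos.mpr ⟨a, haB⟩
      rw [if_pos hnA] at hmaster
      omega
    · rw [if_pos hnA] at hmaster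
      omega
  · rw [if_neg hnA] at hmaster
    omega

end Main5
end LS
/-- Let Q ⊆ V₁ be a pyramidal set with i₁(Q) ≥ i₂(Q). Then the set Q' obtained from Q by
the left shifting is left-pyramidal and satisfies δ(Q') ≤ δ(Q). -/
theorem leftShift_leftPyramidal (n : ℕ) (Q : Finset (ℕ × ℕ)) (hQ : Q ⊆ V1 n)
    (hpyr : Pyramidal n Q) (h12 : i2 n Q ≤ i1 Q) :
    LeftPyramidal n (leftShift n Q) ∧ deltaN n (leftShift n Q) ≤ deltaN n Q := by
  constructor
  · exact LS.leftPyr_leftShift hQ hpyr h12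
  · have hQ' : leftShift n Q ⊆ V1 n := by
      intro v hv
      simp only [leftShift, Finset.mem_filter] at hv
      exact Finset.mem_filter.mpr ⟨hv.1, hv.2.1⟩
    have hpyr' := LS.pyr_leftShift hQ hpyr h12
    rw [LS.deltaN_eq_sum, LS.deltaN_eq_sum]
    apply Finset.sum_le_sum
    intro y hy
    simp only [Finset.mem_Icc] at hy
    rcases Nat.lt_or_ge y 2 with hy1 | hy2
    · have hy0 : y = 1 := by omega
      subst hy0
      calc ((gridNbr n (leftShift n Q)).filter (fun p => p.2 = 1)).card
          ≤ (LS.B1 n (leftShift n Q)).card := LS.fiber1_upper hQ' hpyr'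
        _ = min (2 * LS.R n Q 1) n / 2 := LS.B1_leftShift_card hQ
        _ ≤ (LS.B1 n Q).card := LS.B1_lower hQ hpyr h12
        _ ≤ _ := LS.fiber1_lower hQ
    · calc ((gridNbr n (leftShift n Q)).filter (fun p => p.2 = y)).card
          ≤ (LS.Arow (leftShift n Q) (y - 1)).card := LS.fiber_upper hQ' hpyr' hy2
        _ = LS.R n Q (y - 1) := LS.cardA' hQ (by omega) (by omega)
        _ = (LS.Arow Q (y - 1)).card := LS.R_eq_card_Arow hQ (y - 1)
        _ ≤ _ := LS.fiber_lower hQ hy2 hy.2
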